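/- Let C₀ > 0 be a constant, n and m integers with C₀·n ≤ m ≤ exp(n/C₀), Δ := C₀·√(log m), and let x₁, …, x_m ∈ ℝⁿ be a quasi-orthogonal system. For every η ∈ (0,1), with t = 0.02, the truncated cone C₋′(η) satisfies both inclusions C₋′(η) ⊆ C₋(η) and C₋′(η) ⊆ C₊(η). -/

import Mathlib

open MeasureTheory RealInnerProductSpace Pointwise

/-- The distinguished direction `e₀` in `ℝ^{n+1}`; we identify `ℝⁿ` with the hyperplane
`{x : ⟨x, e₀⟩ = 0}`. -/
noncomputable def e0 (n : ℕ) : EuclideanSpace ℝ (Fin (n + 1)) :=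
  EuclideanSpace.single 0 1

/-- A quasi-orthogonal system `x₁, …, x_m ∈ ℝⁿ` (realized inside the hyperplane
`{x : ⟨x, e₀⟩ = 0}` of `ℝ^{n+1}`) with parameter `Δ`:
`√n/(2Δ) ≤ ‖x i‖ ≤ 2√n/Δ` for all `i` and `|⟨x i, x j⟩| ≤ √n/Δ` for all `i ≠ j`. -/
noncomputable def QuasiOrthH (n : ℕ) (Δ : ℝ) {m : ℕ}
    (x : Fin m → EuclideanSpace ℝ (Fin (n + 1))) : Prop :=
  (∀ i, ⟪x i, e0 n⟫ = 0) ∧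
  (∀ i, Real.sqrt n / (2 * Δ) ≤ ‖x i‖ ∧ ‖x i‖ ≤ 2 * Real.sqrt n / Δ) ∧
  ∀ i j, i ≠ j → |⟪x i, x j⟫| ≤ Real.sqrt n / Δ

/-- `Q = conv{±x_i : i ∈ [m]}`. -/
def Qbody {d m : ℕ} (x : Fin m → EuclideanSpace ℝ (Fin d)) :
    Set (EuclideanSpace ℝ (Fin d)) :=
  convexHull ℝ (Set.range x ∪ Set.range (fun i => -x i))

/-- The Euclidean unit ball `B₂ⁿ` of the hyperplane `{y : ⟨y, e₀⟩ = 0}` of `ℝ^{n+1}`. -/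
noncomputable def ballH (n : ℕ) : Set (EuclideanSpace ℝ (Fin (n + 1))) :=
  Metric.closedBall 0 1 ∩ {y | ⟪y, e0 n⟫ = 0}

/-- `Q_t = conv((1/t) Q ∪ B₂ⁿ)`, formed inside the hyperplane `{y : ⟨y, e₀⟩ = 0}`. -/
noncomputable def QtH (n : ℕ) {m : ℕ} (x : Fin m → EuclideanSpace ℝ (Fin (n + 1)))
    (t : ℝ) : Set (EuclideanSpace ℝ (Fin (n + 1))) :=
  convexHull ℝ ((1 / t) • Qbody x ∪ ballH n)

/-- The polar `L° = {y : ⟨y, z⟩ ≤ 1 for all z ∈ L}` taken inside the hyperplane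
`ℝⁿ = {y : ⟨y, e₀⟩ = 0}` of `ℝ^{n+1}`. -/
noncomputable def polarH (n : ℕ) (L : Set (EuclideanSpace ℝ (Fin (n + 1)))) :
    Set (EuclideanSpace ℝ (Fin (n + 1))) :=
  {y | ⟪y, e0 n⟫ = 0 ∧ ∀ z ∈ L, ⟪y, z⟫ ≤ 1}

/-- `K(η, κ) = conv(((1−η)e₀ + Q) ∪ (−κη e₀ + κ Q₁°))`. -/
noncomputable def Kbody (n : ℕ) {m : ℕ}
    (x : Fin m → EuclideanSpace ℝ (Fin (n + 1))) (η κ : ℝ) :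
    Set (EuclideanSpace ℝ (Fin (n + 1))) :=
  convexHull ℝ
    (((fun v => (1 - η) • e0 n + v) '' Qbody x) ∪
      ((fun v => (-(κ * η)) • e0 n + κ • v) '' polarH n (QtH n x 1)))

/-- `K = conv((e₀ + Q) ∪ Q₁°) ⊆ ℝ^{n+1}`. -/
noncomputable def Kbase (n : ℕ) {m : ℕ}
    (x : Fin m → EuclideanSpace ℝ (Fin (n + 1))) :
    Set (EuclideanSpace ℝ (Fin (n + 1))) :=
  convexHull ℝ (((fun v => e0 n + v) '' Qbody x) ∪ polarH n (QtH n x 1))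

/-- The cone `C₊(η) = {y : y₀ ≤ 1/(1−η), y_⊥ ∈ (1−(1−η)y₀) Q°}`, where `y₀ = ⟨y, e₀⟩` and
`y_⊥ = y − y₀ e₀`. -/
noncomputable def Cplus (n : ℕ) {m : ℕ}
    (x : Fin m → EuclideanSpace ℝ (Fin (n + 1))) (η : ℝ) :
    Set (EuclideanSpace ℝ (Fin (n + 1))) :=
  {y | ⟪y, e0 n⟫ ≤ 1 / (1 - η) ∧
    y - ⟪y, e0 n⟫ • e0 n ∈ (1 - (1 - η) * ⟪y, e0 n⟫) • polarH n (Qbody x)}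

/-- The cone `C₋(η) = {y : −1/η ≤ y₀, y_⊥ ∈ (1+η y₀) Q₁}`. -/
noncomputable def Cminus (n : ℕ) {m : ℕ}
    (x : Fin m → EuclideanSpace ℝ (Fin (n + 1))) (η : ℝ) :
    Set (EuclideanSpace ℝ (Fin (n + 1))) :=
  {y | -(1 / η) ≤ ⟪y, e0 n⟫ ∧
    y - ⟪y, e0 n⟫ • e0 n ∈ (1 + η * ⟪y, e0 n⟫) • QtH n x 1}

/-- The truncated cone `C₋′(η) = {y : −1/η ≤ y₀ ≤ 0.98, y_⊥ ∈ (1+η y₀) Q_t°}`, `t = 0.02`. -/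
noncomputable def CminusPrime (n : ℕ) {m : ℕ}
    (x : Fin m → EuclideanSpace ℝ (Fin (n + 1))) (η : ℝ) :
    Set (EuclideanSpace ℝ (Fin (n + 1))) :=
  {y | -(1 / η) ≤ ⟪y, e0 n⟫ ∧ ⟪y, e0 n⟫ ≤ (0.98 : ℝ) ∧
    y - ⟪y, e0 n⟫ • e0 n ∈ (1 + η * ⟪y, e0 n⟫) • polarH n (QtH n x (0.02 : ℝ))}

lemma polarH_convex (n : ℕ) (L : Set (EuclideanSpace ℝ (Fin (n + 1)))) :
    Convex ℝ (polarH n L) := by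
  intro y hy y' hy' a b ha hb hab
  obtain ⟨hy0, hyL⟩ := hy
  obtain ⟨hy0', hyL'⟩ := hy'
  constructor
  · rw [inner_add_left, real_inner_smul_left, real_inner_smul_left, hy0, hy0']; ring
  · intro z hz
    rw [inner_add_left, real_inner_smul_left, real_inner_smul_left]
    have h1 := hyL z hz
    have h2 := hyL' z hz
    nlinarith

lemma polarH_zero_mem (n : ℕ) (L : Set (EuclideanSpace ℝ (Fin (n + 1)))) :
    (0 : EuclideanSpace ℝ (Fin (n + 1))) ∈ polarH n L := by
  constructor
  · exact inner_zero_left _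
  · intro z hz
    rw [inner_zero_left]
    norm_num

lemma polarH_Qt_subset_ballH (n m : ℕ) (x : Fin m → EuclideanSpace ℝ (Fin (n + 1))) (t : ℝ) :
    polarH n (QtH n x t) ⊆ ballH n := by
  rintro y ⟨hy0, hyz⟩
  refine ⟨Metric.mem_closedBall.2 ?_, hy0⟩
  rw [dist_zero_right]
  by_cases h : y = 0
  · simp [h]
  · have hny : 0 < ‖y‖ := norm_pos_iff.2 h
    have hz : (‖y‖⁻¹ : ℝ) • y ∈ ballH n := by
      constructor
      · rw [Metric.mem_closedBall, dist_zero_right, norm_smul, norm_inv, norm_norm,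
          inv_mul_cancel₀ hny.ne']
      · rw [Set.mem_setOf_eq, real_inner_smul_left, hy0, mul_zero]
    have hz' : (‖y‖⁻¹ : ℝ) • y ∈ QtH n x t :=
      subset_convexHull ℝ _ (Set.mem_union_right _ hz)
    have hle := hyz _ hz'
    rw [real_inner_smul_right, real_inner_self_eq_norm_sq] at hle
    have heq : ‖y‖⁻¹ * ‖y‖ ^ 2 = ‖y‖ := by
      field_simp
    linarith [heq ▸ hle]

lemma inv_smul_polarH_Qt (n m : ℕ) (x : Fin m → EuclideanSpace ℝ (Fin (n + 1))) {t : ℝ}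
    (ht : 0 < t) {y : EuclideanSpace ℝ (Fin (n + 1))} (hy : y ∈ polarH n (QtH n x t)) :
    t⁻¹ • y ∈ polarH n (Qbody x) := by
  obtain ⟨hy0, hyz⟩ := hy
  constructor
  · rw [real_inner_smul_left, hy0, mul_zero]
  · intro z hz
    have hz' : (1 / t) • z ∈ QtH n x t :=
      subset_convexHull ℝ _ (Set.mem_union_left _ (Set.smul_mem_smul_set hz))
    have hle := hyz _ hz'
    rw [real_inner_smul_right, one_div] at hle
    rw [real_inner_smul_left]
    exact hle

/-- For every `η ∈ (0,1)`, the truncated cone `C₋′(η)` is contained both in `C₋(η)` and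
in `C₊(η)`. -/
theorem stmt_15 (C₀ : ℝ) (hC₀ : 0 < C₀) (n m : ℕ)
    (hm₁ : C₀ * (n : ℝ) ≤ (m : ℝ)) (hm₂ : (m : ℝ) ≤ Real.exp ((n : ℝ) / C₀))
    (x : Fin m → EuclideanSpace ℝ (Fin (n + 1)))
    (hx : QuasiOrthH n (C₀ * Real.sqrt (Real.log m)) x)
    (η : ℝ) (hη₀ : 0 < η) (hη₁ : η < 1) :
    CminusPrime n x η ⊆ Cminus n x η ∧ CminusPrime n x η ⊆ Cplus n x η := by
  have hball : ballH n ⊆ QtH n x 1 := fun z hz =>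
    subset_convexHull ℝ _ (Set.mem_union_right _ hz)
  constructor
  · rintro y ⟨h1, h2, h3⟩
    exact ⟨h1, Set.smul_set_mono ((polarH_Qt_subset_ballH n m x _).trans hball) h3⟩
  · rintro y ⟨h1, h2, h3⟩
    set y₀ := ⟪y, e0 n⟫ with hy₀
    have ha : (0 : ℝ) ≤ 1 + η * y₀ := by
      have h := mul_le_mul_of_nonneg_left h1 hη₀.le
      rw [mul_neg, mul_one_div_cancel hη₀.ne'] at h
      linarith
    have hb : (0 : ℝ) < 1 - (1 - η) * y₀ := by
      nlinarith [mul_le_mul_of_nonneg_left h2 (by linarith : (0:ℝ) ≤ 1 - η)]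
    have hab : (1 + η * y₀) * 0.02 ≤ 1 - (1 - η) * y₀ := by
      nlinarith [mul_le_mul_of_nonneg_right h2 (by nlinarith : (0:ℝ) ≤ 1 - 0.98 * η)]
    refine ⟨?_, ?_⟩
    · have hq : (0.98 : ℝ) ≤ 1 / (1 - η) := by
        rw [le_div_iff₀ (by linarith)]
        nlinarith
      linarith
    · obtain ⟨w, hw, hwy⟩ := h3
      have hu : ((0.02 : ℝ))⁻¹ • w ∈ polarH n (Qbody x) :=
        inv_smul_polarH_Qt n m x (by norm_num) hw
      rw [Set.mem_smul_set]
      refine ⟨((1 + η * y₀) * 0.02 / (1 - (1 - η) * y₀)) • (((0.02 : ℝ))⁻¹ • w), ?_, ?_⟩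
      · exact (polarH_convex n _).smul_mem_of_zero_mem (polarH_zero_mem n _) hu
          ⟨div_nonneg (by nlinarith) hb.le, (div_le_one hb).2 hab⟩
      · rw [smul_smul, smul_smul, ← hy₀]
        have hcoef : (1 - (1 - η) * y₀) * ((1 + η * y₀) * 0.02 / (1 - (1 - η) * y₀))
            * (0.02 : ℝ)⁻¹ = 1 + η * y₀ := by
          field_simp
        rw [hcoef]
        exact hwy
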